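/- Let A be a real n×k matrix with full column rank k and let V be a symmetric positive definite k×k real matrix. If N is any Moore–Penrose pseudoinverse of A V Aᵀ (i.e., N satisfies the four Penrose equations with A V Aᵀ), then Aᵀ N A = V⁻¹. -/
import Mathlib


open Matrix

/-- `N` is a Moore–Penrose pseudoinverse of `M`: the four Penrose equations hold. -/
def IsMoorePenrose {n m : ℕ} (M : Matrix (Fin n) (Fin m) ℝ)
    (N : Matrix (Fin m) (Fin n) ℝ) : Prop :=
  M * N * M = M ∧ N * M * N = N ∧ (M * N)ᵀ = M * N ∧ (N * M)ᵀ = N * M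

/-- If `A` has full column rank `k`, `V` is symmetric positive definite and `N` is
a Moore–Penrose pseudoinverse of `A V Aᵀ`, then `Aᵀ N A = V⁻¹`. -/
theorem transpose_pinv_embedding {n k : ℕ}
    (A : Matrix (Fin n) (Fin k) ℝ) (hA : A.rank = k)
    (V : Matrix (Fin k) (Fin k) ℝ) (hV : V.PosDef)
    (N : Matrix (Fin n) (Fin n) ℝ)
    (hN : IsMoorePenrose (A * V * Aᵀ) N) :
    Aᵀ * N * A = V⁻¹ := by
  -- `B = Aᵀ * A` is invertible since `A` has full column rank.
  set B : Matrix (Fin k) (Fin k) ℝ := Aᵀ * A with hB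
  have hBrank : B.rank = k := by rw [hB, Matrix.rank_transpose_mul_self, hA]
  have hBunit : IsUnit B := by
    rw [← Matrix.mulVec_surjective_iff_isUnit]
    have htop : LinearMap.range B.mulVecLin = ⊤ := by
      apply Submodule.eq_top_of_finrank_eq
      simpa [Matrix.rank] using hBrank
    intro v
    obtain ⟨w, hw⟩ := LinearMap.range_eq_top.mp htop v
    exact ⟨w, hw⟩
  have hBdet : IsUnit B.det := (Matrix.isUnit_iff_isUnit_det B).mp hBunit
  have hBinv : B⁻¹ * B = 1 := Matrix.nonsing_inv_mul B hBdet
  have hinvB : B * B⁻¹ = 1 := Matrix.mul_nonsing_inv B hBdet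
  -- cancellation of `A` on the left
  have cancelA : ∀ {p : ℕ} (X Y : Matrix (Fin k) (Fin p) ℝ), A * X = A * Y → X = Y := by
    intro p X Y h
    have h2 : B * X = B * Y := by
      rw [hB, Matrix.mul_assoc, Matrix.mul_assoc, h]
    calc X = B⁻¹ * B * X := by rw [hBinv, Matrix.one_mul]
    _ = B⁻¹ * B * Y := by rw [Matrix.mul_assoc, h2, ← Matrix.mul_assoc]
    _ = Y := by rw [hBinv, Matrix.one_mul]
  -- cancellation of `Aᵀ` on the right
  have cancelAt : ∀ {p : ℕ} (X Y : Matrix (Fin p) (Fin k) ℝ), X * Aᵀ = Y * Aᵀ → X = Y := by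
    intro p X Y h
    have h2 : X * B = Y * B := by
      rw [hB, ← Matrix.mul_assoc, ← Matrix.mul_assoc, h]
    calc X = X * B * B⁻¹ := by rw [Matrix.mul_assoc, hinvB, Matrix.mul_one]
    _ = Y * B * B⁻¹ := by rw [h2]
    _ = Y := by rw [Matrix.mul_assoc, hinvB, Matrix.mul_one]
  -- from the first Penrose equation: V * (Aᵀ N A) * V = V
  have h1 : A * V * Aᵀ * N * (A * V * Aᵀ) = A * V * Aᵀ := hN.1
  have key : V * (Aᵀ * N * A) * V = V := by
    apply cancelA
    apply cancelAt
    calc A * (V * (Aᵀ * N * A) * V) * Aᵀ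
        = A * V * Aᵀ * N * (A * V * Aᵀ) := by
          simp only [Matrix.mul_assoc]
    _ = A * V * Aᵀ := h1
    _ = A * V * Aᵀ := rfl
  -- V is invertible
  have hVdet : IsUnit V.det := (Matrix.isUnit_iff_isUnit_det V).mp hV.isUnit
  have hVinv : V⁻¹ * V = 1 := Matrix.nonsing_inv_mul V hVdet
  have hinvV : V * V⁻¹ = 1 := Matrix.mul_nonsing_inv V hVdet
  calc Aᵀ * N * A
      = V⁻¹ * (V * (Aᵀ * N * A) * V) * V⁻¹ := by
        rw [← Matrix.mul_assoc, ← Matrix.mul_assoc, hVinv, Matrix.one_mul,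
          Matrix.mul_assoc, Matrix.mul_assoc, hinvV, Matrix.mul_one]
  _ = V⁻¹ * V * V⁻¹ := by rw [key]
  _ = V⁻¹ := by rw [hVinv, Matrix.one_mul]
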